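/- The weighted rescaling map ψ intertwines the two weighted 1-forms: for every z ∈ ℂⁿ \ {0} and every v ∈ ℂⁿ, one has ∑_{j=1}^n a_j^{−1} · Im( conj(ψ(z)_j) · (Dψ(z)·v)_j ) = Q(z)^{−1} · ∑_{j=1}^n Im( conj(z_j) · v_j ), where Dψ(z) is the real Fréchet derivative of ψ at z. (That is, ψ*β₁ = β₀.) -/

import Mathlib

open Complex

/-- The weighted quadratic form `Q(z) = ∑_k a_k |z_k|²` on `ℂⁿ`. -/
noncomputable def Qw (n : ℕ) (a : Fin n → ℝ) (z : Fin n → ℂ) : ℝ :=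
  ∑ k, a k * ‖z k‖ ^ 2

/-- The weighted rescaling map `ψ(z)_j = √(a_j / Q(z))·z_j`. -/
noncomputable def psiW (n : ℕ) (a : Fin n → ℝ) (z : Fin n → ℂ) : Fin n → ℂ :=
  fun j => ((Real.sqrt (a j / Qw n a z) : ℝ) : ℂ) * z j

/-- The weighted rescaling map `ψ` intertwines the two weighted `1`-forms: for every
`z ∈ ℂⁿ \ {0}` and every `v ∈ ℂⁿ`,
`∑_j a_j⁻¹·Im(conj(ψ(z)_j)·(Dψ(z)·v)_j) = Q(z)⁻¹·∑_j Im(conj(z_j)·v_j)`,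
i.e. `ψ*β₁ = β₀`. -/
theorem psiW_pullback (n : ℕ) (hn : 1 ≤ n) (a : Fin n → ℝ) (ha : ∀ j, 0 < a j)
    (z : Fin n → ℂ) (hz : z ≠ 0) (v : Fin n → ℂ) :
    ∑ j, (a j)⁻¹ * ((starRingEnd ℂ) (psiW n a z j) * fderiv ℝ (psiW n a) z v j).im
      = (Qw n a z)⁻¹ * ∑ j, ((starRingEnd ℂ) (z j) * v j).im := by
  classical
  obtain ⟨k0, hk0⟩ : ∃ k, z k ≠ 0 := by
    by_contra h; push_neg at h; exact hz (funext h)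
  have hQpos : 0 < Qw n a z := by
    apply Finset.sum_pos' (fun k _ => mul_nonneg (ha k).le (sq_nonneg _))
    exact ⟨k0, Finset.mem_univ _, mul_pos (ha k0) (pow_pos (norm_pos_iff.mpr hk0) 2)⟩
  have hQne : Qw n a z ≠ 0 := hQpos.ne'
  have hQdiff : DifferentiableAt ℝ (Qw n a) z := by
    have : (Qw n a) = fun w => ∑ k, ‖w k‖ ^ 2 * a k := by
      funext w
      exact Finset.sum_congr rfl fun k _ => by
        rw [mul_comm]
    rw [this]
    apply DifferentiableAt.fun_sum
    intro k _
    have h1 : DifferentiableAt ℝ (fun w : Fin n → ℂ => w k) z :=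
      differentiableAt_apply (𝕜 := ℝ) k z
    exact (h1.norm_sq (𝕜 := ℝ)).mul_const _
  set g : Fin n → (Fin n → ℂ) → ℝ := fun j w => Real.sqrt (a j / Qw n a w) with hg
  have hgdiff : ∀ j, DifferentiableAt ℝ (g j) z := by
    intro j
    have hdiv : DifferentiableAt ℝ (fun w => a j / Qw n a w) z := by
      simp only [div_eq_mul_inv]
      exact (hQdiff.inv hQne).const_mul (a j)
    exact hdiv.sqrt (div_pos (ha j) hQpos).ne'
  have hcdiff : ∀ j, DifferentiableAt ℝ (fun w => ((g j w : ℝ) : ℂ)) z := fun j =>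
    Complex.ofRealCLM.differentiableAt.comp z (hgdiff j)
  have hcomp : ∀ j, DifferentiableAt ℝ (fun w => ((g j w : ℝ) : ℂ) * w j) z := fun j =>
    (hcdiff j).mul (differentiableAt_apply (𝕜 := ℝ) j z)
  have hpi : fderiv ℝ (psiW n a) z v = fun j => fderiv ℝ (fun w => ((g j w : ℝ) : ℂ) * w j) z v := by
    have h : psiW n a = fun w j => ((g j w : ℝ) : ℂ) * w j := rfl
    rw [h, fderiv_pi hcomp]
    rfl
  rw [hpi]
  have key : ∀ j, fderiv ℝ (fun w => ((g j w : ℝ) : ℂ) * w j) z v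
      = ((g j z : ℝ) : ℂ) * v j + z j * ((fderiv ℝ (g j) z v : ℝ) : ℂ) := by
    intro j
    rw [fderiv_fun_mul (hcdiff j) (differentiableAt_apply (𝕜 := ℝ) j z)]
    have h1 : fderiv ℝ (fun w => ((g j w : ℝ) : ℂ)) z
        = Complex.ofRealCLM.comp (fderiv ℝ (g j) z) :=
      (Complex.ofRealCLM.hasFDerivAt.comp z (hgdiff j).hasFDerivAt).fderiv
    have h2 : fderiv ℝ (fun w : Fin n → ℂ => w j) z v = v j := by
      rw [show (fun w : Fin n → ℂ => w j) = ⇑(ContinuousLinearMap.proj (R := ℝ) j) from rfl,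
        ContinuousLinearMap.fderiv]
      rfl
    simp [h1, h2, smul_eq_mul]
  have hsq : ∀ j, (g j z) ^ 2 = a j / Qw n a z := fun j =>
    Real.sq_sqrt (div_pos (ha j) hQpos).le
  have hterm : ∀ j, (a j)⁻¹ * ((starRingEnd ℂ) (psiW n a z j)
      * (((g j z : ℝ) : ℂ) * v j + z j * ((fderiv ℝ (g j) z v : ℝ) : ℂ))).im
      = (Qw n a z)⁻¹ * ((starRingEnd ℂ) (z j) * v j).im := by
    intro j
    have hpsi : psiW n a z j = ((g j z : ℝ) : ℂ) * z j := rfl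
    rw [hpsi]
    set c := g j z
    set r := fderiv ℝ (g j) z v
    have him : ((starRingEnd ℂ) (((c : ℝ) : ℂ) * z j)
        * (((c : ℝ) : ℂ) * v j + z j * ((r : ℝ) : ℂ))).im
        = c ^ 2 * ((starRingEnd ℂ) (z j) * v j).im := by
      simp only [map_mul, Complex.conj_ofReal, Complex.add_im, Complex.mul_im,
        Complex.ofReal_re, Complex.ofReal_im, Complex.mul_re, Complex.conj_re,
        Complex.conj_im, Complex.add_re]
      ring
    rw [him, hsq j]
    field_simp [hQne, (ha j).ne']
  calc ∑ j, (a j)⁻¹ * ((starRingEnd ℂ) (psiW n a z j)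
        * fderiv ℝ (fun w => ((g j w : ℝ) : ℂ) * w j) z v).im
      = ∑ j, (Qw n a z)⁻¹ * ((starRingEnd ℂ) (z j) * v j).im := by
        refine Finset.sum_congr rfl fun j _ => ?_
        rw [key j, hterm j]
    _ = (Qw n a z)⁻¹ * ∑ j, ((starRingEnd ℂ) (z j) * v j).im := by
        rw [Finset.mul_sum]
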